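/- Let g = ⊕_{j ∈ (1/2)Z} g_j be a 1/2-Z-graded finite-dimensional Lie algebra over a field of characteristic 0 with a non-degenerate invariant symmetric bilinear form (.|.) compatible with the grading (i.e. (g_i | g_j) = 0 unless i + j = 0). Define κ_{<0}(u,v) = tr_g(p_{<0} ∘ ad u ∘ ad v) and κ_{>0}(u,v) = tr_g(p_{>0} ∘ ad u ∘ ad v), where p_{<0}, p_{>0} are the projections to g_{<0} = ⊕_{j<0} g_j and g_{>0} = ⊕_{j>0} g_j along the grading. Then for all u, v ∈ g such that ad u ∘ ad v preserves the grading, κ_{<0}(u,v) = κ_{>0}(u,v) − tr_{g_{>0}}(p_{>0} ∘ ad [u,v]). -/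

import Mathlib

open LinearMap

/-- Adjoint endomorphisms w.r.t. a nondegenerate symmetric bilinear form have equal trace. -/
lemma trace_eq_trace_of_adjoint {F L : Type*} [Field F] [AddCommGroup L] [Module F L]
    [FiniteDimensional F L] (B : LinearMap.BilinForm F L) (hnd : B.Nondegenerate)
    (hsymm : ∀ x y, B x y = B y x) (f g : Module.End F L)
    (h : ∀ x y, B (f x) y = B x (g y)) :
    LinearMap.trace F L f = LinearMap.trace F L g := by
  classical
  let b := Module.finBasis F L
  let c := B.dualBasis hnd b
  have hcb : ∀ i j, B (c i) (b j) = if j = i then 1 else 0 :=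
    fun i j => B.apply_dualBasis_left hnd b i j
  have hcrepr : ∀ (x : L) i, c.repr x i = B x (b i) :=
    fun x i => B.dualBasis_repr_apply hnd b x i
  have hbrepr : ∀ (x : L) i, b.repr x i = B x (c i) := by
    intro x i
    conv_rhs => rw [← b.sum_repr x]
    rw [map_sum, LinearMap.sum_apply]
    have : ∀ j, B (b.repr x j • b j) (c i) = b.repr x j * (if i = j then 1 else 0) := by
      intro j
      rw [map_smul, LinearMap.smul_apply, smul_eq_mul, hsymm, hcb]
      simp [eq_comm]
    simp_rw [this]
    simp
  rw [trace_eq_matrix_trace F c f, trace_eq_matrix_trace F b g, Matrix.trace, Matrix.trace]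
  apply Finset.sum_congr rfl
  intro i _
  rw [Matrix.diag_apply, Matrix.diag_apply, toMatrix_apply, toMatrix_apply, hcrepr, hbrepr,
    h, hsymm]

/-- Lemma 4.1, eq. (4.2): for a (1/2)ℤ-graded finite-dimensional
Lie algebra with a compatible non-degenerate invariant symmetric bilinear form,
and `u v` such that `ad u ∘ ad v` preserves the grading,
`κ_{<0}(u,v) = κ_{>0}(u,v) - tr_{g_{>0}}(p_{>0} ∘ ad [u,v])`.
The grading is indexed by `ℚ` (supported on half-integers), `pneg`/`ppos` are
the projections onto `g_{<0}`/`g_{>0}` along the grading. -/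
theorem stmt1 {F L : Type*} [Field F] [CharZero F] [LieRing L] [LieAlgebra F L]
    [FiniteDimensional F L]
    (g : ℚ → Submodule F L) (hInt : DirectSum.IsInternal g)
    (hbr : ∀ (i j : ℚ), ∀ x ∈ g i, ∀ y ∈ g j, ⁅x, y⁆ ∈ g (i + j))
    (B : L →ₗ[F] L →ₗ[F] F)
    (hsymm : ∀ x y, B x y = B y x)
    (hinv : ∀ x y z, B ⁅x, y⁆ z = B x ⁅y, z⁆)
    (hnd : ∀ x, (∀ y, B x y = 0) → x = 0)
    (hcompat : ∀ (i j : ℚ), i + j ≠ 0 → ∀ x ∈ g i, ∀ y ∈ g j, B x y = 0)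
    (pneg ppos : Module.End F L)
    (hpneg : ∀ (j : ℚ), ∀ a ∈ g j, pneg a = if j < 0 then a else 0)
    (hppos : ∀ (j : ℚ), ∀ a ∈ g j, ppos a = if 0 < j then a else 0)
    (u v : L)
    (hpres : ∀ (j : ℚ), ∀ a ∈ g j, ⁅u, ⁅v, a⁆⁆ ∈ g j) :
    LinearMap.trace F L (pneg ∘ₗ (LieAlgebra.ad F L u ∘ₗ LieAlgebra.ad F L v))
      = LinearMap.trace F L (ppos ∘ₗ (LieAlgebra.ad F L u ∘ₗ LieAlgebra.ad F L v))
        - LinearMap.trace F L (ppos ∘ₗ LieAlgebra.ad F L ⁅u, v⁆ ∘ₗ ppos) := by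
  have htop : ⨆ j, g j = ⊤ := hInt.submodule_iSup_eq_top
  have hmem : ∀ x : L, x ∈ ⨆ j, g j := fun x => htop ▸ Submodule.mem_top
  -- `ppos` is the adjoint of `pneg`
  have hadj_p : ∀ x y : L, B (pneg x) y = B x (ppos y) := by
    intro x
    refine Submodule.iSup_induction g (motive := fun x => ∀ y, B (pneg x) y = B x (ppos y))
      (hmem x) ?_ (by simp) ?_
    · intro i a ha y
      refine Submodule.iSup_induction g (motive := fun y => B (pneg a) y = B a (ppos y))
        (hmem y) ?_ (by simp) ?_
      · intro j z hz
        rw [hpneg i a ha, hppos j z hz]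
        by_cases hij : i + j = 0
        · have hj : j = -i := by linarith
          subst hj
          rcases lt_trichotomy i 0 with h | h | h
          · rw [if_pos h, if_pos (by linarith)]
          · simp [h]
          · rw [if_neg (by linarith), if_neg (by linarith)]
            simp
        · have h0 : B a z = 0 := hcompat i j hij a ha z hz
          split_ifs <;> simp [h0]
      · intro y₁ y₂ h1 h2
        simp [map_add, h1, h2]
    · intro x₁ x₂ h1 h2 y
      simp only [map_add, LinearMap.add_apply, h1, h2]
  -- `ppos` is idempotent
  have hid : ∀ x : L, ppos (ppos x) = ppos x := by
    intro x
    refine Submodule.iSup_induction g (motive := fun x => ppos (ppos x) = ppos x) (hmem x) ?_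
      (by simp) ?_
    · intro j a ha
      rw [hppos j a ha]
      split_ifs with h
      · rw [hppos j a ha, if_pos h]
      · simp
    · intro x₁ x₂ h1 h2
      simp [map_add, h1, h2]
  have hidem : ppos ∘ₗ ppos = ppos := LinearMap.ext hid
  -- `ad v ∘ ad u` is the adjoint of `ad u ∘ ad v`
  have hadjT : ∀ x y : L, B ⁅u, ⁅v, x⁆⁆ y = B x ⁅v, ⁅u, y⁆⁆ := by
    intro x y
    have e1 : B ⁅u, ⁅v, x⁆⁆ y = - B ⁅v, x⁆ ⁅u, y⁆ := by
      rw [← lie_skew u ⁅v, x⁆, map_neg, LinearMap.neg_apply, hinv]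
    have e2 : B ⁅v, x⁆ ⁅u, y⁆ = - B x ⁅v, ⁅u, y⁆⁆ := by
      rw [← lie_skew v x, map_neg, LinearMap.neg_apply, hinv]
    rw [e1, e2, neg_neg]
  set T : Module.End F L := LieAlgebra.ad F L u ∘ₗ LieAlgebra.ad F L v with hT
  set S : Module.End F L := LieAlgebra.ad F L v ∘ₗ LieAlgebra.ad F L u with hS
  -- trace(pneg ∘ T) = trace(ppos ∘ S)
  have key : LinearMap.trace F L (pneg ∘ₗ T) = LinearMap.trace F L (ppos ∘ₗ S) := by
    have := trace_eq_trace_of_adjoint (F := F) (L := L) B ⟨hnd, fun y hy => hnd y fun x => by rw [hsymm]; exact hy x⟩ hsymm (pneg ∘ₗ T) (S ∘ₗ ppos)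
      (fun x y => by
        simp only [LinearMap.comp_apply, hT, hS, LieAlgebra.ad_apply]
        rw [hadj_p, hadjT])
    rw [this]
    exact LinearMap.trace_mul_comm F S ppos
  have had : LieAlgebra.ad F L ⁅u, v⁆ = T - S := by
    ext x; simp only [LieAlgebra.ad_apply, LinearMap.sub_apply, hT, hS, LinearMap.comp_apply,
      lie_lie]
  rw [had]
  have expand : ppos ∘ₗ (T - S) ∘ₗ ppos = ppos ∘ₗ (T ∘ₗ ppos) - ppos ∘ₗ (S ∘ₗ ppos) := by
    ext x; simp [LinearMap.sub_apply, map_sub]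
  rw [expand, map_sub]
  have cyc : ∀ X : Module.End F L,
      LinearMap.trace F L (ppos ∘ₗ (X ∘ₗ ppos)) = LinearMap.trace F L (ppos ∘ₗ X) := by
    intro X
    calc LinearMap.trace F L (ppos ∘ₗ (X ∘ₗ ppos))
        = LinearMap.trace F L (ppos ∘ₗ (ppos ∘ₗ X)) := by
          rw [show ppos ∘ₗ (X ∘ₗ ppos) = (ppos ∘ₗ X) * ppos from rfl,
            LinearMap.trace_mul_comm]
          rfl
      _ = LinearMap.trace F L (ppos ∘ₗ X) := by rw [← LinearMap.comp_assoc, hidem]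
  rw [cyc T, cyc S, key]
  ring
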